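/- Let A ∈ ℝ^{n×n} be a Schur stable matrix, i.e., every eigenvalue of A has modulus strictly less than 1. Then for every symmetric positive definite matrix Q ∈ ℝ^{n×n} there exists a symmetric positive definite matrix P ∈ ℝ^{n×n} satisfying the discrete-time Lyapunov equation AᵀPA − P = −Q. -/

import Mathlib

open Matrix

/-- A real square matrix is Schur stable if every (complex) eigenvalue has
modulus strictly less than one. -/
def SchurStable {n : ℕ} (A : Matrix (Fin n) (Fin n) ℝ) : Prop :=
  ∀ z ∈ spectrum ℂ (A.map (algebraMap ℝ ℂ)), ‖z‖ < 1

namespace SchurLyapAux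

open scoped NNReal ENNReal
open Filter

attribute [local instance] Matrix.linftyOpNormedRing Matrix.linftyOpNormedAlgebra
  Matrix.linftyOpNormedSpace

variable {n : ℕ}

lemma entry_nnnorm_le (M : Matrix (Fin n) (Fin n) ℝ) (i j : Fin n) : ‖M i j‖₊ ≤ ‖M‖₊ := by
  rw [Matrix.linfty_opNNNorm_def]
  exact le_trans (Finset.single_le_sum (f := fun j => ‖M i j‖₊) (fun _ _ => zero_le)
    (Finset.mem_univ j)) (Finset.le_sup (f := fun i => ∑ j, ‖M i j‖₊) (Finset.mem_univ i))

lemma transpose_nnnorm_le (M : Matrix (Fin n) (Fin n) ℝ) : ‖Mᵀ‖₊ ≤ n * ‖M‖₊ := by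
  rw [Matrix.linfty_opNNNorm_def (A := Mᵀ)]
  apply Finset.sup_le
  intro i _
  calc ∑ j, ‖Mᵀ i j‖₊ ≤ ∑ _j : Fin n, ‖M‖₊ :=
        Finset.sum_le_sum fun j _ => entry_nnnorm_le M j i
    _ = n * ‖M‖₊ := by simp [Finset.sum_const, mul_comm]

lemma map_nnnorm_eq (M : Matrix (Fin n) (Fin n) ℝ) :
    ‖M.map (algebraMap ℝ ℂ)‖₊ = ‖M‖₊ := by
  rw [Matrix.linfty_opNNNorm_def, Matrix.linfty_opNNNorm_def]
  congr 1
  ext i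
  congr 1
  exact Finset.sum_congr rfl fun j _ => by simp [Matrix.map_apply]

/-- Geometric decay of powers of a Schur stable matrix. -/
lemma pow_nnnorm_eventually_le (A : Matrix (Fin n) (Fin n) ℝ) (hn : n ≠ 0)
    (hA : SchurStable A) :
    ∃ c : ℝ≥0, c < 1 ∧ ∀ᶠ k in atTop, ‖A ^ k‖₊ ≤ c ^ k := by
  haveI : Nonempty (Fin n) := Fin.pos_iff_nonempty.mp (Nat.pos_of_ne_zero hn)
  set B : Matrix (Fin n) (Fin n) ℂ := A.map (algebraMap ℝ ℂ) with hB
  have hρ : spectralRadius ℂ B < 1 := by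
    have h1 : spectralRadius ℂ B < ((1 : ℝ≥0) : ℝ≥0∞) := by
      refine spectrum.spectralRadius_lt_of_forall_lt B ?_
      intro z hz
      exact_mod_cast hA z hz
    simpa using h1
  obtain ⟨c, hc1, hc2⟩ := exists_between hρ
  have hcne : c ≠ ⊤ := (hc2.trans_le le_top).ne
  refine ⟨c.toNNReal, ?_, ?_⟩
  · have := hc2
    rwa [← ENNReal.coe_toNNReal hcne, ← ENNReal.coe_one, ENNReal.coe_lt_coe] at this
  · have hglf := spectrum.pow_nnnorm_pow_one_div_tendsto_nhds_spectralRadius B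
    have hev : ∀ᶠ k : ℕ in atTop, ((‖B ^ k‖₊ : ℝ≥0∞)) ^ (1 / (k : ℝ)) < c :=
      hglf.eventually_lt_const hc1
    filter_upwards [hev, eventually_ge_atTop 1] with k hk hk1
    have hkne : (k : ℝ) ≠ 0 := by positivity
    have h2 : (((‖B ^ k‖₊ : ℝ≥0∞)) ^ (1 / (k : ℝ))) ^ (k : ℝ) ≤ c ^ (k : ℝ) :=
      ENNReal.rpow_le_rpow hk.le (by positivity)
    rw [← ENNReal.rpow_mul, one_div_mul_cancel hkne, ENNReal.rpow_one,
      ENNReal.rpow_natCast] at h2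
    have hBA : ‖B ^ k‖₊ = ‖A ^ k‖₊ := by
      have : B ^ k = (A ^ k).map (algebraMap ℝ ℂ) := by
        simpa [hB, RingHom.mapMatrix_apply] using (map_pow (RingHom.mapMatrix (algebraMap ℝ ℂ)) A k).symm
      rw [this, map_nnnorm_eq]
    rw [hBA] at h2
    have := h2.trans_eq (by rw [← ENNReal.coe_toNNReal hcne, ← ENNReal.coe_pow])
    exact_mod_cast this

/-- The Lyapunov linear map `M ↦ Aᵀ * M * A`. -/
def lyapL (A : Matrix (Fin n) (Fin n) ℝ) :
    Matrix (Fin n) (Fin n) ℝ →ₗ[ℝ] Matrix (Fin n) (Fin n) ℝ where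
  toFun M := Aᵀ * M * A
  map_add' M N := by noncomm_ring
  map_smul' r M := by simp [Matrix.mul_smul, Matrix.smul_mul]

/-- The quadratic form functional `M ↦ x ⬝ᵥ (M *ᵥ x)`. -/
def qfL (x : Fin n → ℝ) : Matrix (Fin n) (Fin n) ℝ →ₗ[ℝ] ℝ where
  toFun M := x ⬝ᵥ (M *ᵥ x)
  map_add' M N := by simp [Matrix.add_mulVec, dotProduct_add]
  map_smul' r M := by simp [Matrix.smul_mulVec, dotProduct_smul]

end SchurLyapAux

open SchurLyapAux Filter
open scoped NNReal

attribute [local instance] Matrix.linftyOpNormedRing Matrix.linftyOpNormedAlgebra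
  Matrix.linftyOpNormedSpace

/-- **Discrete-time Lyapunov equation.**  If `A` is Schur stable, then for every
symmetric positive definite `Q` there exists a symmetric positive definite `P`
with `AᵀPA - P = -Q`. -/
theorem schur_stable_exists_lyapunov {n : ℕ} (A : Matrix (Fin n) (Fin n) ℝ)
    (hA : SchurStable A) (Q : Matrix (Fin n) (Fin n) ℝ) (hQ : Q.PosDef) :
    ∃ P : Matrix (Fin n) (Fin n) ℝ, P.PosDef ∧ Aᵀ * P * A - P = -Q := by
  rcases eq_or_ne n 0 with hn | hn
  · subst hn
    exact ⟨Q, hQ, Subsingleton.elim _ _⟩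
  -- the series of terms
  set f : ℕ → Matrix (Fin n) (Fin n) ℝ := fun k => (Aᵀ) ^ k * Q * A ^ k with hf
  -- summability
  obtain ⟨c, hc, hev⟩ := pow_nnnorm_eventually_le A hn hA
  have hsum : Summable f := by
    refine Summable.of_norm_bounded_eventually_nat
      (g := fun k => ((n : ℝ) * ‖Q‖) * ((c : ℝ) ^ 2) ^ k) ?_ ?_
    · refine Summable.mul_left _ (summable_geometric_of_lt_one (by positivity) ?_)
      have : (c : ℝ) < 1 := hc
      nlinarith [c.coe_nonneg]
    · filter_upwards [hev] with k hk
      have hk' : ‖A ^ k‖₊ ≤ c ^ k := hk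
      have h1 : ‖f k‖₊ ≤ ‖(Aᵀ) ^ k‖₊ * ‖Q‖₊ * ‖A ^ k‖₊ :=
        le_trans (Matrix.linfty_opNNNorm_mul _ _)
          (mul_le_mul_left (Matrix.linfty_opNNNorm_mul _ _) _)
      have h2 : ‖(Aᵀ) ^ k‖₊ ≤ n * ‖A ^ k‖₊ := by
        rw [← Matrix.transpose_pow]
        exact transpose_nnnorm_le _
      have h3 : ‖f k‖₊ ≤ (n * ‖Q‖₊) * (c ^ 2) ^ k := by
        calc ‖f k‖₊ ≤ (n * ‖A ^ k‖₊) * ‖Q‖₊ * ‖A ^ k‖₊ :=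
              h1.trans (by gcongr)
          _ ≤ (n * c ^ k) * ‖Q‖₊ * c ^ k := by gcongr
          _ = (n * ‖Q‖₊) * (c ^ 2) ^ k := by ring
      calc ‖f k‖ = ((‖f k‖₊ : ℝ)) := rfl
        _ ≤ (((n * ‖Q‖₊) * (c ^ 2) ^ k : ℝ≥0) : ℝ) := by exact_mod_cast h3
        _ = ((n : ℝ) * ‖Q‖) * ((c : ℝ) ^ 2) ^ k := by
            push_cast
            ring
  set P : Matrix (Fin n) (Fin n) ℝ := ∑' k, f k with hP
  have hPsum : HasSum f P := hsum.hasSum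
  -- each term is symmetric
  have hsymm : ∀ k, (f k)ᵀ = f k := by
    intro k
    have hQt : Qᵀ = Q := by
      have := hQ.1
      rwa [Matrix.IsHermitian, Matrix.conjTranspose_eq_transpose_of_trivial] at this
    simp [hf, Matrix.transpose_mul, Matrix.transpose_pow, Matrix.transpose_transpose, hQt,
      mul_assoc]
  -- the quadratic form of each term
  have hterm : ∀ (x : Fin n → ℝ) (k : ℕ),
      x ⬝ᵥ (f k *ᵥ x) = (A ^ k *ᵥ x) ⬝ᵥ (Q *ᵥ (A ^ k *ᵥ x)) := by
    intro x k
    rw [hf]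
    rw [← Matrix.mulVec_mulVec, ← Matrix.mulVec_mulVec, ← Matrix.transpose_pow,
      Matrix.dotProduct_mulVec, Matrix.vecMul_transpose]
  refine ⟨P, posDef_iff_dotProduct_mulVec.mpr ⟨?_, ?_⟩, ?_⟩
  · -- Hermitian
    rw [Matrix.IsHermitian, Matrix.conjTranspose_eq_transpose_of_trivial, hP,
      Matrix.transpose_tsum]
    exact tsum_congr fun k => hsymm k
  · -- positive definite
    intro x hx
    have hq : HasSum (fun k => x ⬝ᵥ (f k *ᵥ x)) (x ⬝ᵥ (P *ᵥ x)) := by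
      have hcont : Continuous (qfL (n := n) x) :=
        LinearMap.continuous_of_finiteDimensional _
      exact (ContinuousLinearMap.hasSum ⟨qfL x, hcont⟩ hPsum :)
    have hnonneg : ∀ k, 0 ≤ x ⬝ᵥ (f k *ᵥ x) := by
      intro k
      rw [hterm]
      simpa using hQ.posSemidef.dotProduct_mulVec_nonneg (A ^ k *ᵥ x)
    have h0 : x ⬝ᵥ (f 0 *ᵥ x) = x ⬝ᵥ (Q *ᵥ x) := by
      simp [hf]
    have hpos0 : 0 < x ⬝ᵥ (f 0 *ᵥ x) := by
      rw [h0]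
      simpa using hQ.dotProduct_mulVec_pos hx
    have hle : x ⬝ᵥ (f 0 *ᵥ x) ≤ x ⬝ᵥ (P *ᵥ x) := by
      rw [← hq.tsum_eq]
      exact Summable.le_tsum hq.summable 0 fun j _ => hnonneg j
    simpa using lt_of_lt_of_le hpos0 hle
  · -- the Lyapunov equation
    have hcontL : Continuous (lyapL (n := n) A) :=
      LinearMap.continuous_of_finiteDimensional _
    have hL : HasSum (fun k => Aᵀ * f k * A) (Aᵀ * P * A) :=
      (ContinuousLinearMap.hasSum ⟨lyapL A, hcontL⟩ hPsum :)
    have hshift : ∀ k, Aᵀ * f k * A = f (k + 1) := by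
      intro k
      rw [hf]
      calc Aᵀ * (Aᵀ ^ k * Q * A ^ k) * A = (Aᵀ * Aᵀ ^ k) * Q * (A ^ k * A) := by
            noncomm_ring
        _ = Aᵀ ^ (k + 1) * Q * A ^ (k + 1) := by rw [← pow_succ', ← pow_succ]
    have hL' : HasSum (fun k => f (k + 1)) (Aᵀ * P * A) :=
      hL.congr_fun fun k => (hshift k).symm
    have hPdecomp : P = f 0 + ∑' k, f (k + 1) := by
      rw [hP]
      exact Summable.tsum_eq_zero_add hsum
    have hf0 : f 0 = Q := by simp [hf]
    rw [hL'.tsum_eq.symm, hPdecomp, hf0]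
    abel
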